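/- The central trinomial coefficients satisfy T_n = ∫_{−1}^3 x^n · (1/(π√((3−x)(1+x)))) dx for all n ∈ ℕ, where T_n is the coefficient of x^n in (1+x+x²)^n; in particular, (T_n) is a Hausdorff moment sequence on [−1,3]. -/

import Mathlib

open MeasureTheory Real Polynomial

/-- `y` is a `K`-moment sequence. -/
def IsMomentSeqOn (K : Set ℝ) (y : ℕ → ℝ) : Prop :=
  ∃ μ : Measure ℝ, μ Kᶜ = 0 ∧
    ∀ n : ℕ, Integrable (fun x : ℝ => x ^ n) μ ∧ y n = ∫ x, x ^ n ∂μ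

/-- The `n`-th central trinomial coefficient: the coefficient of `x^n` in
`(1 + x + x²)^n`. -/
noncomputable def centralTrinomial (n : ℕ) : ℕ := (((1 + X + X ^ 2 : Polynomial ℕ)) ^ n).coeff n

open Finset intervalIntegral

section Aux

lemma coeff_one_add_X_sq_pow_self (j : ℕ) :
    ((1 + X ^ 2 : Polynomial ℕ) ^ j).coeff j = if Even j then j.choose (j / 2) else 0 := by
  rw [add_pow, finset_sum_coeff]
  by_cases hj : Even j
  · obtain ⟨m, hm⟩ := hj
    rw [Finset.sum_eq_single m]
    · simp only [one_pow, one_mul, ← pow_mul, coeff_natCast_mul, coeff_X_pow]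
      have h1 : j = 2 * (j - m) := by omega
      have h2 : j / 2 = m := by omega
      simp [← h1, hm, h2]
      simp [two_mul, Nat.add_mul_div_left, show (m + m) / 2 = m by omega]
    · intro b hb hbm
      simp only [one_pow, one_mul, ← pow_mul, coeff_natCast_mul, coeff_X_pow]
      have : ¬ (j = 2 * (j - b)) := by
        simp at hb; omega
      simp [this]
    · intro h
      exact absurd (Finset.mem_range.2 (by omega)) h
  · rw [if_neg hj]
    apply Finset.sum_eq_zero
    intro b _
    simp only [one_pow, one_mul, ← pow_mul, coeff_natCast_mul, coeff_X_pow]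
    have : ¬ (j = 2 * (j - b)) := by
      intro h; exact hj ⟨j - b, by omega⟩
    simp [this]

lemma centralTrinomial_eq_sum (n : ℕ) :
    centralTrinomial n =
      ∑ k ∈ range (n + 1), if Even k then n.choose k * k.choose (k / 2) else 0 := by
  rw [centralTrinomial]
  have hx : (1 + X + X ^ 2 : Polynomial ℕ) = X + (1 + X ^ 2) := by ring
  rw [hx, add_pow, finset_sum_coeff]
  rw [← Finset.sum_range_reflect]
  apply Finset.sum_congr rfl
  intro k hk
  rw [Finset.mem_range] at hk
  have hkn : k ≤ n := by omega
  have h0 : n + 1 - 1 - k = n - k := by omega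
  have h1 : n - (n - k) = k := by omega
  rw [h0, h1]
  rw [coeff_mul_natCast]
  have h3 := coeff_X_pow_mul ((1 + X ^ 2 : Polynomial ℕ) ^ k) (n - k) k
  rw [show k + (n - k) = n by omega] at h3
  rw [h3, coeff_one_add_X_sq_pow_self, Nat.choose_symm hkn]
  by_cases h : Even k <;> simp [h, mul_comm]

lemma integral_cos_pow_odd_pi (m : ℕ) : (∫ x in (0:ℝ)..π, cos x ^ (2 * m + 1)) = 0 := by
  induction m with
  | zero => simp
  | succ k ih =>
    have h := integral_cos_pow (a := 0) (b := π) (n := 2 * k + 1)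
    rw [show 2 * (k + 1) + 1 = 2 * k + 1 + 2 by ring, h, ih]
    simp

lemma integral_cos_pow_even_pi (m : ℕ) :
    (∫ x in (0:ℝ)..π, cos x ^ (2 * m)) = π * ((2 * m).choose m) / 4 ^ m := by
  induction m with
  | zero => simp
  | succ k ih =>
    have h := integral_cos_pow (a := 0) (b := π) (n := 2 * k)
    rw [show 2 * (k + 1) = 2 * k + 2 by ring, h, ih]
    have hc := Nat.succ_mul_centralBinom_succ k
    rw [Nat.centralBinom, Nat.centralBinom, show 2 * (k + 1) = 2 * k + 2 by ring] at hc
    have hc' : ((k + 1 : ℕ) : ℝ) * ((2 * k + 2).choose (k + 1) : ℝ)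
        = 2 * (2 * (k : ℝ) + 1) * ((2 * k).choose k : ℝ) := by
      exact_mod_cast congrArg (fun x : ℕ => (x : ℝ)) hc
    simp only [Real.sin_zero, Real.sin_pi]
    push_cast
    have h4 : (4 : ℝ) ^ (k + 1) = 4 * 4 ^ k := by ring
    field_simp
    push_cast at hc'
    linear_combination (-(2:ℝ) * π * 4 ^ k) * hc'

lemma integral_one_add_two_cos_pow (n : ℕ) :
    (∫ θ in (0:ℝ)..π, (1 + 2 * cos θ) ^ n)
      = π * ∑ k ∈ range (n + 1), (if Even k then (n.choose k * k.choose (k / 2) : ℝ) else 0) := by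
  have hexp : ∀ θ : ℝ, (1 + 2 * cos θ) ^ n
      = ∑ k ∈ range (n + 1), (n.choose k : ℝ) * 2 ^ k * cos θ ^ k := by
    intro θ
    rw [add_comm, add_pow]
    apply Finset.sum_congr rfl
    intro k _
    rw [mul_pow]
    ring
  simp_rw [hexp]
  rw [intervalIntegral.integral_finset_sum]
  · rw [Finset.mul_sum]
    apply Finset.sum_congr rfl
    intro k _
    rw [intervalIntegral.integral_const_mul]
    rcases Nat.even_or_odd k with hk | hk
    · obtain ⟨m, hm⟩ := hk
      rw [show k = 2 * m by omega, integral_cos_pow_even_pi]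
      rw [if_pos (even_two_mul m), show (2 * m) / 2 = m by omega]
      have : (4 : ℝ) ^ m = 2 ^ (2 * m) := by
        rw [pow_mul]; norm_num
      field_simp [this]
      ring_nf; rw [this]; ring
    · obtain ⟨m, hm⟩ := hk
      rw [show k = 2 * m + 1 by omega, integral_cos_pow_odd_pi]
      rw [if_neg (by simp [parity_simps] : ¬ Even (2 * m + 1))]
      ring
  · intro k _
    apply Continuous.intervalIntegrable
    fun_prop

noncomputable def wfun (x : ℝ) : ℝ := 1 / (π * Real.sqrt ((3 - x) * (1 + x)))

lemma g_image : (fun θ : ℝ => 1 + 2 * cos θ) '' Set.Ioo 0 π = Set.Ioo (-1) 3 := by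
  ext x
  constructor
  · rintro ⟨θ, hθ, rfl⟩
    have h1 : cos θ < 1 := by
      have := Real.strictAntiOn_cos (Set.left_mem_Icc.2 Real.pi_pos.le)
        ⟨hθ.1.le, hθ.2.le⟩ hθ.1
      simpa using this
    have h2 : -1 < cos θ := by
      have := Real.strictAntiOn_cos ⟨hθ.1.le, hθ.2.le⟩
        (Set.right_mem_Icc.2 Real.pi_pos.le) hθ.2
      simpa using this
    simp only [Set.mem_Ioo]
    constructor <;> linarith
  · rintro ⟨h1, h2⟩
    refine ⟨Real.arccos ((x - 1) / 2), ⟨?_, ?_⟩, ?_⟩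
    · apply Real.arccos_pos.2; linarith
    · rw [Real.arccos, sub_lt_iff_lt_add]
      have : -(π / 2) < Real.arcsin ((x - 1) / 2) :=
        Real.neg_pi_div_two_lt_arcsin.2 (by linarith)
      linarith
    · dsimp only
      rw [Real.cos_arccos (by linarith) (by linarith)]; ring

lemma g_inj : Set.InjOn (fun θ : ℝ => 1 + 2 * cos θ) (Set.Ioo 0 π) := by
  intro a ha b hb hab
  have : cos a = cos b := by
    simp only at hab; linarith
  exact Real.injOn_cos ⟨ha.1.le, ha.2.le⟩ ⟨hb.1.le, hb.2.le⟩ this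

lemma g_deriv : ∀ θ ∈ Set.Ioo (0:ℝ) π,
    HasDerivWithinAt (fun θ : ℝ => 1 + 2 * cos θ) (2 * (-sin θ)) (Set.Ioo 0 π) θ := by
  intro θ _
  exact (((Real.hasDerivAt_cos θ).const_mul 2).const_add 1).hasDerivWithinAt

lemma g_pointwise (n : ℕ) : ∀ θ ∈ Set.Ioo (0:ℝ) π,
    |2 * (-sin θ)| • ((1 + 2 * cos θ) ^ n * wfun (1 + 2 * cos θ))
      = (1 + 2 * cos θ) ^ n * π⁻¹ := by
  intro θ hθ
  have hs : 0 < sin θ := Real.sin_pos_of_pos_of_lt_pi hθ.1 hθ.2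
  have habs : |2 * (-sin θ)| = 2 * sin θ := by
    rw [abs_of_nonpos (by nlinarith)]; ring
  have hsq : (3 - (1 + 2 * cos θ)) * (1 + (1 + 2 * cos θ)) = (2 * sin θ) ^ 2 := by
    nlinarith [Real.sin_sq_add_cos_sq θ]
  rw [smul_eq_mul, habs, wfun, hsq, Real.sqrt_sq (by linarith)]
  have hπ : π ≠ 0 := Real.pi_ne_zero
  field_simp

lemma key_integrable (n : ℕ) :
    IntegrableOn (fun x : ℝ => x ^ n * wfun x) (Set.Ioo (-1 : ℝ) 3) := by
  rw [← g_image,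
    integrableOn_image_iff_integrableOn_abs_deriv_smul measurableSet_Ioo g_deriv g_inj]
  have hcont : IntegrableOn (fun θ : ℝ => (1 + 2 * cos θ) ^ n * π⁻¹) (Set.Ioo 0 π) := by
    apply ((Continuous.integrableOn_Icc (by fun_prop)).mono_set Set.Ioo_subset_Icc_self)
  exact hcont.congr_fun (fun θ hθ => (g_pointwise n θ hθ).symm) measurableSet_Ioo

lemma key_integral (n : ℕ) :
    ∫ x in Set.Ioo (-1 : ℝ) 3, x ^ n * wfun x
      = (∑ k ∈ range (n + 1), if Even k then (n.choose k * k.choose (k / 2) : ℝ) else 0) := by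
  rw [← g_image,
    integral_image_eq_integral_abs_deriv_smul measurableSet_Ioo g_deriv g_inj]
  rw [setIntegral_congr_fun measurableSet_Ioo (g_pointwise n)]
  have h1 : ∫ θ in Set.Ioo (0:ℝ) π, (1 + 2 * cos θ) ^ n * π⁻¹
      = (∫ θ in (0:ℝ)..π, (1 + 2 * cos θ) ^ n) * π⁻¹ := by
    rw [intervalIntegral.integral_of_le Real.pi_pos.le,
      MeasureTheory.integral_Ioc_eq_integral_Ioo, ← MeasureTheory.integral_mul_const]
  rw [h1, integral_one_add_two_cos_pow]
  rw [mul_comm π, mul_assoc, mul_inv_cancel₀ Real.pi_ne_zero, mul_one]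

lemma interval_eq (n : ℕ) :
    (∫ x in (-1:ℝ)..3, x ^ n * (1 / (π * Real.sqrt ((3 - x) * (1 + x)))))
      = ∫ x in Set.Ioo (-1 : ℝ) 3, x ^ n * wfun x := by
  rw [intervalIntegral.integral_of_le (by norm_num : (-1:ℝ) ≤ 3),
    MeasureTheory.integral_Ioc_eq_integral_Ioo]
  rfl

lemma part_one (n : ℕ) : (centralTrinomial n : ℝ) =
    ∫ x in (-1:ℝ)..3, x ^ n * (1 / (π * Real.sqrt ((3 - x) * (1 + x)))) := by
  rw [interval_eq, key_integral, centralTrinomial_eq_sum]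
  push_cast [apply_ite (fun m : ℕ => (m : ℝ))]
  rfl

end Aux

/-- the central trinomial coefficients satisfy
`T n = ∫_{−1}³ xⁿ / (π·√((3−x)(1+x))) dx`, and in particular they form a
Hausdorff moment sequence on `[−1,3]`. -/
theorem centralTrinomial_integral_repr :
    (∀ n : ℕ, (centralTrinomial n : ℝ) =
      ∫ x in (-1:ℝ)..3, x ^ n * (1 / (π * Real.sqrt ((3 - x) * (1 + x))))) ∧
    IsMomentSeqOn (Set.Icc (-1) 3) (fun n => (centralTrinomial n : ℝ)) := by
  have hwmeas : Measurable wfun := by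
    unfold wfun
    fun_prop
  have hwnonneg : ∀ x, 0 ≤ wfun x := by
    intro x
    unfold wfun
    positivity
  refine ⟨part_one, ?_⟩
  refine ⟨(volume.restrict (Set.Ioo (-1 : ℝ) 3)).withDensity
    (fun x => ENNReal.ofReal (wfun x)), ?_, ?_⟩
  · rw [withDensity_apply _ (measurableSet_Icc.compl)]
    rw [Measure.restrict_restrict measurableSet_Icc.compl]
    have : (Set.Icc (-1:ℝ) 3)ᶜ ∩ Set.Ioo (-1:ℝ) 3 = ∅ := by
      rw [Set.eq_empty_iff_forall_notMem]
      rintro x ⟨hx1, hx2⟩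
      exact hx1 ⟨hx2.1.le, hx2.2.le⟩
    rw [this]
    simp
  · intro n
    have hmeas : Measurable (fun x : ℝ => ENNReal.ofReal (wfun x)) :=
      hwmeas.ennreal_ofReal
    have hint : Integrable (fun x : ℝ => x ^ n)
        (((volume.restrict (Set.Ioo (-1 : ℝ) 3)).withDensity
          (fun x => ENNReal.ofReal (wfun x)))) := by
      rw [integrable_withDensity_iff hmeas (ae_of_all _ fun x => ENNReal.ofReal_lt_top)]
      have := key_integrable n
      apply this.congr_fun ?_ measurableSet_Ioo
      intro x _
      simp [ENNReal.toReal_ofReal (hwnonneg x), mul_comm]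
    refine ⟨hint, ?_⟩
    show (centralTrinomial n : ℝ) = _
    rw [part_one n, interval_eq n]
    have h5 : ∫ x, x ^ n ∂(((volume.restrict (Set.Ioo (-1 : ℝ) 3)).withDensity
        (fun x => ENNReal.ofReal (wfun x))))
        = ∫ x in Set.Ioo (-1 : ℝ) 3, (Real.toNNReal (wfun x) : ℝ) • x ^ n := by
      have h2 : (fun x : ℝ => ENNReal.ofReal (wfun x))
          = fun x => ((Real.toNNReal (wfun x) : NNReal) : ENNReal) := rfl
      rw [h2, integral_withDensity_eq_integral_smul hwmeas.real_toNNReal]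
      apply setIntegral_congr_fun measurableSet_Ioo
      intro x _
      simp [NNReal.smul_def]
    rw [h5]
    apply setIntegral_congr_fun measurableSet_Ioo
    intro x _
    simp [Real.coe_toNNReal _ (hwnonneg x), mul_comm]
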